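/- Let T, V : ℝ^m → ℝ and let G_T, G_V : ℝ^m × ℝ^m → ℝ^m be discrete gradients of T and V respectively, i.e. ⟨G_T(p,p'), p' − p⟩ = T(p') − T(p) and ⟨G_V(x,x'), x' − x⟩ = V(x') − V(x) for all arguments. Let δ be an invertible m×m real matrix. If x, x', p, p' ∈ ℝ^m satisfy δ⁻¹(x' − x) = G_T(p, p') and (δᵀ)⁻¹(p' − p) = −G_V(x, x'), then T(p') + V(x') = T(p) + V(x). (The modified discrete gradient scheme preserves the energy H = T(p) + V(x) exactly, for any invertible matrix δ.) -/

import Mathlib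

open Matrix
open scoped RealInnerProductSpace

/-- The modified discrete gradient scheme
`δ⁻¹(x' − x) = G_T(p,p')`, `(δᵀ)⁻¹(p' − p) = −G_V(x,x')` preserves the energy
`H = T(p) + V(x)` exactly, for any invertible matrix `δ` and any discrete
gradients `G_T`, `G_V` of `T`, `V`. -/
theorem modified_discrete_gradient_preserves_energy
    (m : ℕ)
    (T V : EuclideanSpace ℝ (Fin m) → ℝ)
    (GT GV : EuclideanSpace ℝ (Fin m) → EuclideanSpace ℝ (Fin m) →
      EuclideanSpace ℝ (Fin m))
    (hGT : ∀ p p', ⟪GT p p', p' - p⟫ = T p' - T p)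
    (hGV : ∀ x x', ⟪GV x x', x' - x⟫ = V x' - V x)
    (δ : Matrix (Fin m) (Fin m) ℝ) (hδ : IsUnit δ.det)
    (x x' p p' : EuclideanSpace ℝ (Fin m))
    (scheme1 : Matrix.toEuclideanLin δ⁻¹ (x' - x) = GT p p')
    (scheme2 : Matrix.toEuclideanLin (δᵀ)⁻¹ (p' - p) = -GV x x') :
    T p' + V x' = T p + V x := by
  have hδT : IsUnit δᵀ.det := by rwa [Matrix.det_transpose]
  have h1 : x' - x = Matrix.toEuclideanLin δ (GT p p') := by
    rw [← scheme1]
    simp only [Matrix.toEuclideanLin_apply, Equiv.apply_symm_apply,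
      Matrix.mulVec_mulVec]
    rw [Matrix.mul_nonsing_inv δ hδ, Matrix.one_mulVec]
  have h2 : p' - p = -Matrix.toEuclideanLin δᵀ (GV x x') := by
    have h := congrArg (Matrix.toEuclideanLin δᵀ) scheme2
    rw [map_neg] at h
    rw [← h]
    simp only [Matrix.toEuclideanLin_apply, Equiv.apply_symm_apply,
      Matrix.mulVec_mulVec]
    rw [Matrix.mul_nonsing_inv δᵀ hδT, Matrix.one_mulVec]
  have hadj : Matrix.toEuclideanLin δᵀ
      = LinearMap.adjoint (Matrix.toEuclideanLin δ) := by
    rw [← Matrix.toEuclideanLin_conjTranspose_eq_adjoint]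
    congr 1
  have key : T p' - T p = -(V x' - V x) := by
    rw [← hGT p p', ← hGV x x', h2, hadj, inner_neg_right,
      LinearMap.adjoint_inner_right, ← h1, real_inner_comm]
  linarith
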